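/- Let p ∈ (1,∞), p' = p/(p−1), and let b₂, b₃ ≥ 0. Then there exist constants B₁, B₂ ≥ 0, depending only on p, b₂, b₃, with the following property: for all Lebesgue-measurable functions φ, ψ : ℝ → [0,∞) such that (a) ∫_ℝ φ(s)^p ds ≤ 1, (b) ∫_{−∞}^t ψ(s)^{p'} ds ≤ b₂ + t for every t ≥ 0, and (c) e^{t/p} ∫_t^∞ e^{−s/p} ψ(s) ds ≤ b₃ for every t ≥ 0, and for every λ ∈ ℝ, the Lebesgue measure of the set E_λ = { t ≥ 0 : F(t) ≤ λ } satisfies |E_λ| ≤ B₁|λ| + B₂, where F(t) = t − ( e^t ∫_t^∞ e^{−s/p'} φ(s) ds · ∫_t^∞ e^{−s/p} ψ(s) ds + ∫_{−∞}^t φ(s) ψ(s) ds )^{p'}. -/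

import Mathlib

open MeasureTheory Set

/-- The function `F` from the proof of the local Adams inequality:
`F(t) = t − ( e^t ∫_t^∞ e^{−s/p'} φ(s) ds · ∫_t^∞ e^{−s/p} ψ(s) ds + ∫_{−∞}^t φ(s) ψ(s) ds )^{p'}`,
where `p' = p/(p−1)`. -/
noncomputable def adamsF (p : ℝ) (φ ψ : ℝ → ℝ) (t : ℝ) : ℝ :=
  t - (Real.exp t * (∫ s in Ioi t, Real.exp (-s / (p / (p - 1))) * φ s) *
        (∫ s in Ioi t, Real.exp (-s / p) * ψ s) +
      ∫ s in Iic t, φ s * ψ s) ^ (p / (p - 1))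


namespace AdamsAux


lemma rpow_one_div_cancel {x p : ℝ} (hx : 0 ≤ x) (hp : p ≠ 0) : (x ^ (1/p)) ^ p = x := by
  rw [← Real.rpow_mul hx, one_div, inv_mul_cancel₀ hp, Real.rpow_one]

lemma rpow_p_one_div_cancel {x p : ℝ} (hx : 0 ≤ x) (hp : p ≠ 0) : (x ^ p) ^ (1/p) = x := by
  rw [← Real.rpow_mul hx, one_div, mul_inv_cancel₀ hp, Real.rpow_one]

lemma rpow_split {x p q : ℝ} (hpq : p.HolderConjugate q) (hx : 0 ≤ x) :
    x ^ (1/p) * x ^ (1/q) = x := by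
  rcases eq_or_lt_of_le hx with h | h
  · rw [← h, Real.zero_rpow hpq.one_div_ne_zero, zero_mul]
  · rw [← Real.rpow_add h, ← Real.rpow_one x]
    norm_num
    rw [hpq.inv_add_inv_eq_one, Real.rpow_one]

lemma young {a b p q : ℝ} (hpq : p.HolderConjugate q) (ha : 0 ≤ a) (hb : 0 ≤ b) :
    a ^ (1/p) * b ^ (1/q) ≤ a / p + b / q := by
  have h := Real.young_inequality_of_nonneg (Real.rpow_nonneg ha (1/p))
    (Real.rpow_nonneg hb (1/q)) hpq
  rwa [rpow_one_div_cancel ha hpq.ne_zero, rpow_one_div_cancel hb hpq.symm.ne_zero] at h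

lemma q_div_p {p q : ℝ} (hpq : p.HolderConjugate q) : q / p = q - 1 :=
  hpq.symm.div_conj_eq_sub_one

/-- root-difference, upper bound : `v^{1/q} - u^{1/q} ≤ (v-u)/(q u^{1/p})` in product form. -/
lemma rd_upper {u v p q : ℝ} (hpq : p.HolderConjugate q) (hu : 0 ≤ u) (hv : 0 ≤ v) :
    q * u ^ (1/p) * (v ^ (1/q) - u ^ (1/q)) ≤ v - u := by
  have hy := young hpq hu hv
  have hsplit := rpow_split hpq hu
  have hqp := q_div_p hpq
  have hq0 : (0:ℝ) < q := hpq.symm.pos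
  have hq0' : q ≠ 0 := hq0.ne'
  have e1 : q * (u / p) = (q - 1) * u := by rw [← hqp]; ring
  have e2 : q * (v / q) = v := by field_simp
  have e : q * (u / p + v / q) = (q - 1) * u + v := by rw [mul_add, e1, e2]
  have hy' : q * (u ^ (1/p) * v ^ (1/q)) ≤ (q - 1) * u + v := by
    rw [← e]; exact mul_le_mul_of_nonneg_left hy hq0.le
  have h2 : q * (u ^ (1/p) * u ^ (1/q)) = q * u := by rw [hsplit]
  nlinarith [hy', h2]

/-- root-difference, lower bound : `(v-u)/(q v^{1/p}) ≤ v^{1/q} - u^{1/q}` in product form. -/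
lemma rd_lower {u v p q : ℝ} (hpq : p.HolderConjugate q) (hu : 0 ≤ u) (hv : 0 ≤ v) :
    v - u ≤ q * v ^ (1/p) * (v ^ (1/q) - u ^ (1/q)) := by
  have hy := young hpq hv hu
  have hsplit := rpow_split hpq hv
  have hqp := q_div_p hpq
  have hq0 : (0:ℝ) < q := hpq.symm.pos
  have hq0' : q ≠ 0 := hq0.ne'
  have e1 : q * (v / p) = (q - 1) * v := by rw [← hqp]; ring
  have e2 : q * (u / q) = u := by field_simp
  have e : q * (v / p + u / q) = (q - 1) * v + u := by rw [mul_add, e1, e2]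
  have hy' : q * (v ^ (1/p) * u ^ (1/q)) ≤ (q - 1) * v + u := by
    rw [← e]; exact mul_le_mul_of_nonneg_left hy hq0.le
  have h2 : q * (v ^ (1/p) * v ^ (1/q)) = q * v := by rw [hsplit]
  nlinarith [hy', h2]

lemma bern {x p : ℝ} (hp : 1 < p) (h0 : 0 ≤ x) (h1 : x ≤ 1) :
    (1 - x) ^ (1/p) ≤ 1 - x / p := by
  have hp0 : (0:ℝ) < p := lt_trans zero_lt_one hp
  have hxp : x / p ≤ 1 := by
    rw [div_le_one hp0]; linarith
  have hb : 1 - x ≤ (1 - x/p) ^ p := by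
    have := one_add_mul_self_le_rpow_one_add (s := -(x/p)) (by linarith) hp.le
    have e : 1 + p * (-(x/p)) = 1 - x := by field_simp; ring
    rw [e] at this
    simpa [sub_eq_add_neg] using this
  calc (1 - x) ^ (1/p) ≤ ((1 - x/p) ^ p) ^ (1/p) :=
        Real.rpow_le_rpow (by linarith) hb (by positivity)
    _ = 1 - x/p := rpow_p_one_div_cancel (by linarith) hp0.ne'

lemma subadd {u v e : ℝ} (hu : 0 ≤ u) (hv : 0 ≤ v) (he0 : 0 ≤ e) (he1 : e ≤ 1) :
    (u + v) ^ e ≤ u ^ e + v ^ e := by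
  have h := NNReal.rpow_add_le_add_rpow u.toNNReal v.toNNReal he0 he1
  have h2 : (((u.toNNReal + v.toNNReal : NNReal)) : ℝ) ^ e
      ≤ ((u.toNNReal : ℝ)) ^ e + ((v.toNNReal : ℝ)) ^ e := by exact_mod_cast h
  simpa [Real.coe_toNNReal u hu, Real.coe_toNNReal v hv] using h2



/-- Step 1: the tail-mass bound `x·t ≤ A₁`. -/
lemma step1 {p q b₂ b₃ lam t x m n : ℝ} (hpq : p.HolderConjugate q)
    (hb₂ : 0 ≤ b₂) (hb₃ : 0 ≤ b₃)
    (hx : 0 ≤ x) (hm : 0 ≤ m) (hn : 0 ≤ n) (hmx : m + x ≤ 1) (hnb : n ≤ b₂ + t)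
    (ht : 2*|lam| + 2*b₂ + 2 ≤ t)
    (H : (t - lam) ^ (1/q) ≤ b₃ * x ^ (1/p) + m ^ (1/p) * n ^ (1/q)) :
    x * t ≤ 2*p*(2*(b₂+|lam|) + 2^q * b₃^q) := by
  have hp1 : 1 < p := hpq.lt
  have hp0 : 0 < p := hpq.pos
  have hq1 : 1 < q := hpq.symm.lt
  have hq0 : 0 < q := hpq.symm.pos
  have habs : 0 ≤ |lam| := abs_nonneg lam
  have ht2 : 2 ≤ t := by linarith
  have ht0 : 0 < t := by linarith
  have hlam2 : |lam| ≤ t/2 := by linarith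
  have htl : t/2 ≤ t - lam := by
    have := le_abs_self lam
    linarith
  have htl0 : 0 < t - lam := by linarith
  obtain ⟨Y, hYdef⟩ : ∃ Y, Y = (b₂ + t) ^ (1/q) := ⟨_, rfl⟩
  have hbt1 : 1 ≤ b₂ + t := by linarith
  have hbt0 : 0 < b₂ + t := by linarith
  have hY1 : 1 ≤ Y := by
    rw [hYdef]
    have := Real.rpow_le_rpow zero_le_one hbt1 (by positivity : (0:ℝ) ≤ 1/q)
    rwa [Real.one_rpow] at this
  have hY0 : 0 < Y := by linarith
  have htp0 : (0:ℝ) < t ^ (1/p) := Real.rpow_pos_of_pos ht0 _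
  -- h1 : m^{1/p} n^{1/q} ≤ (1-x)^{1/p} Y
  have h1 : m ^ (1/p) * n ^ (1/q) ≤ (1-x) ^ (1/p) * Y := by
    apply mul_le_mul
    · exact Real.rpow_le_rpow hm (by linarith) (by positivity)
    · rw [hYdef]; exact Real.rpow_le_rpow hn hnb (by positivity)
    · positivity
    · exact Real.rpow_nonneg (by linarith) _
  have h2 : (1-x) ^ (1/p) * Y ≤ (1 - x/p) * Y :=
    mul_le_mul_of_nonneg_right (bern hp1 hx (by linarith)) (by positivity)
  -- h3 : Young trick
  have h3 : b₃ * x ^ (1/p) ≤ x*Y/(2*p) + 2^q * b₃^q / t^(1/p) := by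
    have e : (x*(Y/2)) ^ (1/p) * (2/Y) ^ (1/p) = x ^ (1/p) := by
      rw [← Real.mul_rpow (by positivity) (by positivity)]
      congr 1
      field_simp
    have hb' : (0:ℝ) ≤ b₃ * (2/Y) ^ (1/p) := by positivity
    have hyoung := young hpq (by positivity : (0:ℝ) ≤ x*(Y/2))
      (by positivity : (0:ℝ) ≤ (b₃ * (2/Y) ^ (1/p))^q)
    rw [rpow_p_one_div_cancel hb' hq0.ne'] at hyoung
    have lhs_eq : (x*(Y/2)) ^ (1/p) * (b₃ * (2/Y) ^ (1/p)) = b₃ * x ^ (1/p) := by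
      rw [← e]; ring
    rw [lhs_eq] at hyoung
    -- now bound the two RHS terms
    have hterm1 : x*(Y/2)/p ≤ x*Y/(2*p) := le_of_eq (by ring)
    have hterm2 : (b₃ * (2/Y) ^ (1/p))^q / q ≤ 2^q * b₃^q / t^(1/p) := by
      have e2 : (b₃ * (2/Y) ^ (1/p))^q = b₃^q * (2/Y) ^ (q/p) := by
        rw [Real.mul_rpow hb₃ (by positivity), ← Real.rpow_mul (by positivity)]
        rw [one_div, inv_mul_eq_div]
      have hYqp : Y ^ (q/p) = (b₂+t) ^ (1/p) := by
        rw [hYdef, ← Real.rpow_mul hbt0.le]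
        congr 1
        field_simp
      have h2Y : (2/Y) ^ (q/p) ≤ 2^q / t^(1/p) := by
        rw [Real.div_rpow (by norm_num) hY0.le, hYqp]
        apply div_le_div₀ (by positivity)
        · exact Real.rpow_le_rpow_of_exponent_le one_le_two (div_le_self hq0.le hp1.le)
        · exact htp0
        · exact Real.rpow_le_rpow ht0.le (by linarith) (by positivity)
      calc (b₃ * (2/Y) ^ (1/p))^q / q ≤ (b₃ * (2/Y) ^ (1/p))^q :=
            div_le_self (by positivity) hq1.le
        _ = b₃^q * (2/Y) ^ (q/p) := e2
        _ ≤ b₃^q * (2^q / t^(1/p)) := mul_le_mul_of_nonneg_left h2Y (by positivity)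
        _ = 2^q * b₃^q / t^(1/p) := by ring
    linarith
  -- h4 : Y ≤ (t-lam)^{1/q} + 2(b₂+|lam|)/t^{1/p}
  have h4 : Y ≤ (t-lam) ^ (1/q) + 2*(b₂+|lam|)/t^(1/p) := by
    rcases le_or_gt (b₂ + t) (t - lam) with hc | hc
    · have : Y ≤ (t-lam) ^ (1/q) := by
        rw [hYdef]; exact Real.rpow_le_rpow hbt0.le hc (by positivity)
      have : (0:ℝ) ≤ 2*(b₂+|lam|)/t^(1/p) := by positivity
      linarith
    · rcases le_or_gt Y ((t-lam) ^ (1/q)) with hc2 | hc2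
      · have : (0:ℝ) ≤ 2*(b₂+|lam|)/t^(1/p) := by positivity
        linarith
      · have hrd := rd_upper hpq htl0.le hbt0.le (q := q)
        rw [← hYdef] at hrd
        -- q (t-lam)^{1/p} (Y - (t-lam)^{1/q}) ≤ b₂ + lam
        have hrd' : q * (t-lam) ^ (1/p) * (Y - (t-lam) ^ (1/q)) ≤ b₂ + |lam| := by
          have := le_abs_self lam
          calc q * (t-lam) ^ (1/p) * (Y - (t-lam) ^ (1/q)) ≤ (b₂ + t) - (t - lam) := hrd
            _ = b₂ + lam := by ring
            _ ≤ b₂ + |lam| := by linarith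
        have hlow : t^(1/p)/2 ≤ q * (t-lam) ^ (1/p) := by
          have h21 : t^(1/p) ≤ (t/2)^(1/p) * 2 := by
            have : t ^ (1/p) = (t/2) ^ (1/p) * 2 ^ ((1:ℝ)/p) := by
              rw [← Real.mul_rpow (by linarith) (by norm_num)]
              norm_num
            rw [this]
            apply mul_le_mul_of_nonneg_left _ (by positivity)
            calc (2:ℝ) ^ ((1:ℝ)/p) ≤ 2 ^ (1:ℝ) :=
                  Real.rpow_le_rpow_of_exponent_le one_le_two (by
                    rw [div_le_one hp0]; linarith)
              _ = 2 := Real.rpow_one 2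
          have h22 : (t/2)^(1/p) ≤ (t-lam)^(1/p) :=
            Real.rpow_le_rpow (by linarith) htl (by positivity)
          have h23 : (t-lam)^(1/p) ≤ q * (t-lam)^(1/p) := by
            nlinarith [Real.rpow_nonneg htl0.le (1/p)]
          linarith
        have hpos : 0 < Y - (t-lam) ^ (1/q) := by linarith
        have : t^(1/p)/2 * (Y - (t-lam) ^ (1/q)) ≤ b₂ + |lam| := by
          calc t^(1/p)/2 * (Y - (t-lam) ^ (1/q))
              ≤ q * (t-lam) ^ (1/p) * (Y - (t-lam) ^ (1/q)) :=
                mul_le_mul_of_nonneg_right hlow hpos.le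
            _ ≤ b₂ + |lam| := hrd'
        have final : Y - (t-lam) ^ (1/q) ≤ 2*(b₂+|lam|)/t^(1/p) := by
          rw [le_div_iff₀ htp0]
          have h2' := mul_le_mul_of_nonneg_left this (by norm_num : (0:ℝ) ≤ 2)
          calc (Y - (t-lam)^(1/q)) * t^(1/p)
              = 2*(t^(1/p)/2*(Y - (t-lam)^(1/q))) := by ring
            _ ≤ 2*(b₂+|lam|) := by linarith
        linarith
  -- assemble
  have hassemble : x*Y/(2*p) ≤ (2*(b₂+|lam|) + 2^q*b₃^q)/t^(1/p) := by
    have hxYp : x*Y/p - x*Y/(2*p) = x*Y/(2*p) := by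
      field_simp
      ring
    have hH2 : (t - lam) ^ (1/q) ≤ x*Y/(2*p) + 2^q * b₃^q / t^(1/p) + (1 - x/p) * Y := by
      calc (t - lam) ^ (1/q) ≤ b₃ * x ^ (1/p) + m ^ (1/p) * n ^ (1/q) := H
        _ ≤ (x*Y/(2*p) + 2^q * b₃^q / t^(1/p)) + (1 - x/p) * Y := by linarith
    have hexp : (1 - x/p) * Y = Y - x*Y/p := by ring
    rw [hexp] at hH2
    have : x*Y/p - x*Y/(2*p) ≤ Y - (t - lam) ^ (1/q) + 2^q * b₃^q / t^(1/p) := by linarith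
    rw [hxYp] at this
    have hd : Y - (t - lam) ^ (1/q) ≤ 2*(b₂+|lam|)/t^(1/p) := by linarith
    calc x*Y/(2*p) ≤ 2*(b₂+|lam|)/t^(1/p) + 2^q * b₃^q / t^(1/p) := by linarith
      _ = (2*(b₂+|lam|) + 2^q*b₃^q)/t^(1/p) := by ring
  -- conclude
  have hxY : x * Y ≤ 2*p*(2*(b₂+|lam|) + 2^q*b₃^q)/t^(1/p) := by
    have e1 : x*Y = (2*p) * (x*Y/(2*p)) := by field_simp
    calc x*Y = (2*p) * (x*Y/(2*p)) := e1
      _ ≤ (2*p) * ((2*(b₂+|lam|) + 2^q*b₃^q)/t^(1/p)) :=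
          mul_le_mul_of_nonneg_left hassemble (by positivity)
      _ = 2*p*(2*(b₂+|lam|) + 2^q*b₃^q)/t^(1/p) := by ring
  have htq : x * t ^ (1/q) ≤ x * Y := by
    apply mul_le_mul_of_nonneg_left _ hx
    rw [hYdef]
    exact Real.rpow_le_rpow ht0.le (by linarith) (by positivity)
  have hsplitt : t ^ (1/p) * t ^ (1/q) = t := rpow_split hpq ht0.le
  calc x * t = x * t^(1/q) * t^(1/p) := by rw [mul_assoc, mul_comm (t^(1/q)), hsplitt]
    _ ≤ x * Y * t^(1/p) := mul_le_mul_of_nonneg_right htq htp0.le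
    _ ≤ 2*p*(2*(b₂+|lam|) + 2^q*b₃^q)/t^(1/p) * t^(1/p) :=
        mul_le_mul_of_nonneg_right hxY htp0.le
    _ = 2*p*(2*(b₂+|lam|) + 2^q*b₃^q) := div_mul_cancel₀ _ htp0.ne'



set_option maxHeartbeats 1000000 in
/-- The two-point core estimate. -/
lemma core {p q b₂ b₃ lam N g Abar g6 g7 c8 D T t' t d' dt m' mt n' nt k : ℝ}
    (hpq : p.HolderConjugate q) (hb₂ : 0 ≤ b₂) (hb₃ : 0 ≤ b₃)
    (hN : N = 1 + |lam| + b₂)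
    (hg : g = 1 + b₃ + 2^q*b₃^q)
    (hA : Abar = 6*p*g)
    (hg6 : g6 = 2 + 2*q*b₃*Abar)
    (hg7 : g7 = 4*q*b₃*Abar + 8*q*Abar*g6)
    (hc8 : c8 = 8*q*Abar)
    (hD : D = (2 + 2*g7 + (2*c8)^p)*N)
    (hT : T = (2 + (16*q*Abar)^p)*N + (16*q*(b₃+b₂^(1/q)))^q)
    (hTt' : T ≤ t') (ht't : t' ≤ t)
    (hd' : 0 ≤ d') (hdt : 0 ≤ dt) (hm' : 0 ≤ m') (hmt : 0 ≤ mt)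
    (hn' : 0 ≤ n') (hnt : 0 ≤ nt) (hk : 0 ≤ k)
    (hm'd' : m' + d' ≤ 1) (hmtdt : mt + dt ≤ 1)
    (hn'b : n' ≤ b₂ + t') (hntb : nt ≤ b₂ + t) (hnk : n' + k ≤ b₂ + t)
    (H1 : (t-lam)^(1/q) ≤ b₃*dt^(1/p) + m'^(1/p)*n'^(1/q) + d'^(1/p)*k^(1/q))
    (H2 : (t'-lam)^(1/q) ≤ b₃*d'^(1/p) + m'^(1/p)*n'^(1/q))
    (H3 : (t-lam)^(1/q) ≤ b₃*dt^(1/p) + mt^(1/p)*nt^(1/q)) :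
    t - t' ≤ D := by
  have hp1 : 1 < p := hpq.lt
  have hp0 : 0 < p := hpq.pos
  have hq1 : 1 < q := hpq.symm.lt
  have hq0 : 0 < q := hpq.symm.pos
  have habs : 0 ≤ |lam| := abs_nonneg lam
  have hN1 : 1 ≤ N := by rw [hN]; linarith
  have hN0 : 0 < N := by linarith
  have hpow0 : (0:ℝ) ≤ 2^q*b₃^q := by positivity
  have hg1 : 1 ≤ g := by rw [hg]; linarith
  have hA6 : 6 ≤ Abar := by
    have h1 : 1*1 ≤ p*g := mul_le_mul hp1.le hg1 zero_le_one (by linarith)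
    rw [hA]; linarith
  have hA1 : 1 ≤ Abar := by linarith
  have hA0 : 0 < Abar := by linarith
  have hqbA0 : 0 ≤ 2*q*b₃*Abar := by positivity
  have hg62 : 2 ≤ g6 := by rw [hg6]; linarith
  have hg60 : 0 ≤ g6 := by linarith
  have hg70 : 0 ≤ g7 := by
    rw [hg7]
    have h1 : 0 ≤ 4*q*b₃*Abar := by positivity
    have h2 : 0 ≤ 8*q*Abar*g6 := by
      apply mul_nonneg _ hg60; positivity
    linarith
  have hc80 : 0 < c8 := by rw [hc8]; positivity
  have hc8p0 : (0:ℝ) ≤ (2*c8)^p := Real.rpow_nonneg (by linarith) _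
  have h16qA : (0:ℝ) ≤ (16*q*Abar)^p := Real.rpow_nonneg (by positivity) _
  have hb2q : (0:ℝ) ≤ b₂^(1/q) := Real.rpow_nonneg hb₂ _
  have hT3 : (0:ℝ) ≤ (16*q*(b₃+b₂^(1/q)))^q := Real.rpow_nonneg (by positivity) _
  have hXN : 0 ≤ (16*q*Abar)^p * N := mul_nonneg h16qA hN0.le
  have hT2N : 2*N ≤ T := by rw [hT]; linarith [hXN, hT3]
  have hTbig : (16*q*Abar)^p * N ≤ T := by rw [hT]; linarith [hN0.le, hT3]
  have hTconst : (16*q*(b₃+b₂^(1/q)))^q + 2*N ≤ T := by rw [hT]; linarith [hXN]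
  have hlamt' : 2*|lam| + 2*b₂ + 2 ≤ t' := by
    have e : 2*|lam| + 2*b₂ + 2 = 2*N := by rw [hN]; ring
    linarith
  have hlamt : 2*|lam| + 2*b₂ + 2 ≤ t := by linarith
  have ht'0 : 0 < t' := by linarith
  have ht0 : 0 < t := by linarith
  have ht'p0 : (0:ℝ) < t'^(1/p) := Real.rpow_pos_of_pos ht'0 _
  have htp0 : (0:ℝ) < t^(1/p) := Real.rpow_pos_of_pos ht0 _
  have hlamle : lam ≤ |lam| := le_abs_self lam
  have hlamge : -|lam| ≤ lam := neg_abs_le lam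
  have htl'0 : 0 < t' - lam := by linarith
  have htl0 : 0 < t - lam := by linarith
  -- step 1 at t' and t
  have hA1N : 2*p*(2*(b₂+|lam|) + 2^q * b₃^q) ≤ Abar*N := by
    have h1 : 2*(b₂+|lam|) ≤ 2*N := by rw [hN]; linarith
    have h2 : 2^q*b₃^q ≤ g*N := by
      have hgN : g*1 ≤ g*N := mul_le_mul_of_nonneg_left hN1 (by linarith)
      have : 2^q*b₃^q ≤ g := by rw [hg]; linarith
      linarith
    have h3 : 2*N ≤ 2*(g*N) := by
      have := mul_le_mul_of_nonneg_right hg1 hN0.le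
      linarith
    have hsum : 2*(b₂+|lam|) + 2^q*b₃^q ≤ 2*(g*N) + g*N := by linarith
    calc 2*p*(2*(b₂+|lam|) + 2^q * b₃^q) ≤ 2*p*(2*(g*N) + g*N) :=
          mul_le_mul_of_nonneg_left hsum (by positivity)
      _ = Abar*N := by rw [hA]; ring
  have s1' : d' * t' ≤ Abar*N :=
    le_trans (step1 hpq hb₂ hb₃ hd' hm' hn' hm'd' hn'b hlamt' H2) hA1N
  have s1t : dt * t ≤ Abar*N :=
    le_trans (step1 hpq hb₂ hb₃ hdt hmt hnt hmtdt hntb hlamt H3) hA1N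
  -- rpow facts
  have hp1inv : (1:ℝ)/p ≤ 1 := by rw [div_le_one hp0]; linarith
  have hq1inv : (1:ℝ)/q ≤ 1 := by rw [div_le_one hq0]; linarith
  have hNp1 : N^(1/p) ≤ N := by
    calc N^(1/p) ≤ N^(1:ℝ) := Real.rpow_le_rpow_of_exponent_le hN1 hp1inv
      _ = N := Real.rpow_one N
  have hNp0 : (0:ℝ) < N^(1/p) := Real.rpow_pos_of_pos hN0 _
  have hABp : (Abar*N)^(1/p) ≤ Abar * N^(1/p) := by
    rw [Real.mul_rpow hA0.le hN0.le]
    apply mul_le_mul_of_nonneg_right _ (Real.rpow_nonneg hN0.le _)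
    calc Abar^(1/p) ≤ Abar^(1:ℝ) := Real.rpow_le_rpow_of_exponent_le hA1 hp1inv
      _ = Abar := Real.rpow_one Abar
  have hABN : (Abar*N)^(1/p) ≤ Abar * N := by
    have : Abar * N^(1/p) ≤ Abar * N := mul_le_mul_of_nonneg_left hNp1 hA0.le
    linarith
  have hd'p : d'^(1/p) * t'^(1/p) ≤ (Abar*N)^(1/p) := by
    rw [← Real.mul_rpow hd' ht'0.le]
    exact Real.rpow_le_rpow (by positivity) s1' (by positivity)
  have hdtp : dt^(1/p) * t^(1/p) ≤ (Abar*N)^(1/p) := by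
    rw [← Real.mul_rpow hdt ht0.le]
    exact Real.rpow_le_rpow (by positivity) s1t (by positivity)
  have hm'le1 : m'^(1/p) ≤ 1 := Real.rpow_le_one hm' (by linarith) (by positivity)
  have hdtle1 : dt^(1/p) ≤ 1 := Real.rpow_le_one hdt (by linarith) (by positivity)
  have hd'0 : (0:ℝ) ≤ d'^(1/p) := Real.rpow_nonneg hd' _
  have hdt0 : (0:ℝ) ≤ dt^(1/p) := Real.rpow_nonneg hdt _
  have hn'0 : (0:ℝ) ≤ n'^(1/q) := Real.rpow_nonneg hn' _
  have hk0 : (0:ℝ) ≤ k^(1/q) := Real.rpow_nonneg hk _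
  have hn'q : n'^(1/q) ≤ (b₂+t')^(1/q) := Real.rpow_le_rpow hn' hn'b (by positivity)
  have h2pow : (2:ℝ)^((1:ℝ)/p) ≤ 2 := by
    calc (2:ℝ)^((1:ℝ)/p) ≤ 2^(1:ℝ) := Real.rpow_le_rpow_of_exponent_le one_le_two hp1inv
      _ = 2 := Real.rpow_one 2
  have h2rt' : (t'-lam)^(1/p) ≤ 2*t'^(1/p) := by
    calc (t'-lam)^(1/p) ≤ (2*t')^(1/p) :=
          Real.rpow_le_rpow htl'0.le (by linarith) (by positivity)
      _ = 2^((1:ℝ)/p) * t'^(1/p) := Real.mul_rpow (by norm_num) ht'0.le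
      _ ≤ 2*t'^(1/p) := mul_le_mul_of_nonneg_right h2pow ht'p0.le
  have h2rt : (t-lam)^(1/p) ≤ 2*t^(1/p) := by
    calc (t-lam)^(1/p) ≤ (2*t)^(1/p) :=
          Real.rpow_le_rpow htl0.le (by linarith) (by positivity)
      _ = 2^((1:ℝ)/p) * t^(1/p) := Real.mul_rpow (by norm_num) ht0.le
      _ ≤ 2*t^(1/p) := mul_le_mul_of_nonneg_right h2pow htp0.le
  -- lower bound on n'
  have hnlow : (t' - lam) - n' ≤ 2*q*b₃*(Abar*N) := by
    have hH2' : (t'-lam)^(1/q) - n'^(1/q) ≤ b₃*d'^(1/p) := by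
      have h := mul_le_mul_of_nonneg_right hm'le1 hn'0
      rw [one_mul] at h
      linarith
    have hrd := rd_lower hpq hn' htl'0.le (p := p)
    have hmul : q * (t'-lam)^(1/p) * ((t'-lam)^(1/q) - n'^(1/q))
        ≤ q * (t'-lam)^(1/p) * (b₃*d'^(1/p)) :=
      mul_le_mul_of_nonneg_left hH2' (by positivity)
    have hin : (t'-lam)^(1/p) * d'^(1/p) ≤ 2*(Abar*N) := by
      have e2 : (t'-lam)^(1/p) * d'^(1/p) ≤ (2*t'^(1/p)) * d'^(1/p) :=
        mul_le_mul_of_nonneg_right h2rt' hd'0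
      have e3 : t'^(1/p)*d'^(1/p) ≤ (Abar*N)^(1/p) := by rw [mul_comm]; exact hd'p
      have e2' : (2*t'^(1/p)) * d'^(1/p) = 2*(t'^(1/p)*d'^(1/p)) := by ring
      rw [e2'] at e2
      linarith [hABN]
    have hfin : q * (t'-lam)^(1/p) * (b₃*d'^(1/p)) ≤ 2*q*b₃*(Abar*N) := by
      calc q * (t'-lam)^(1/p) * (b₃*d'^(1/p))
          = (q*b₃) * ((t'-lam)^(1/p) * d'^(1/p)) := by ring
        _ ≤ (q*b₃) * (2*(Abar*N)) := mul_le_mul_of_nonneg_left hin (by positivity)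
        _ = 2*q*b₃*(Abar*N) := by ring
    linarith
  have hNlam : b₂ + |lam| ≤ N := by rw [hN]; linarith
  have hg6N : b₂ + |lam| + 2*q*b₃*(Abar*N) ≤ g6*N := by
    have e : g6*N = 2*N + 2*q*b₃*(Abar*N) := by rw [hg6]; ring
    rw [e]; linarith
  have hksub : k ≤ (t - t') + g6*N := by
    have h1 : b₂ + t' - n' ≤ b₂ + |lam| + 2*q*b₃*(Abar*N) := by linarith
    linarith
  -- the pair bound from H1
  have hm'n' : m'^(1/p)*n'^(1/q) ≤ (b₂+t')^(1/q) := by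
    calc m'^(1/p)*n'^(1/q) ≤ 1*(b₂+t')^(1/q) :=
          mul_le_mul hm'le1 hn'q hn'0 zero_le_one
      _ = (b₂+t')^(1/q) := one_mul _
  have hH1' : (t-lam)^(1/q) - (b₂+t')^(1/q) ≤ b₃*dt^(1/p) + d'^(1/p)*k^(1/q) := by
    linarith
  have hrdmain := rd_lower hpq (u := b₂+t') (by linarith : (0:ℝ) ≤ b₂+t') htl0.le (p := p)
  have hmain : (t-lam) - (b₂+t')
      ≤ q * (t-lam)^(1/p) * (b₃*dt^(1/p) + d'^(1/p)*k^(1/q)) := by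
    calc (t-lam) - (b₂+t')
        ≤ q * (t-lam)^(1/p) * ((t-lam)^(1/q) - (b₂+t')^(1/q)) := hrdmain
      _ ≤ q * (t-lam)^(1/p) * (b₃*dt^(1/p) + d'^(1/p)*k^(1/q)) :=
          mul_le_mul_of_nonneg_left hH1' (by positivity)
  have hterm1 : q * (t-lam)^(1/p) * (b₃*dt^(1/p)) ≤ 2*q*b₃*(Abar*N) := by
    have hin : (t-lam)^(1/p) * dt^(1/p) ≤ 2*(Abar*N) := by
      have e2 : (t-lam)^(1/p) * dt^(1/p) ≤ (2*t^(1/p)) * dt^(1/p) :=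
        mul_le_mul_of_nonneg_right h2rt hdt0
      have e3 : t^(1/p)*dt^(1/p) ≤ (Abar*N)^(1/p) := by rw [mul_comm]; exact hdtp
      have e2' : (2*t^(1/p)) * dt^(1/p) = 2*(t^(1/p)*dt^(1/p)) := by ring
      rw [e2'] at e2
      linarith [hABN]
    calc q * (t-lam)^(1/p) * (b₃*dt^(1/p))
        = (q*b₃) * ((t-lam)^(1/p) * dt^(1/p)) := by ring
      _ ≤ (q*b₃) * (2*(Abar*N)) := mul_le_mul_of_nonneg_left hin (by positivity)
      _ = 2*q*b₃*(Abar*N) := by ring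
  -- case split
  rcases le_or_gt t (2*t') with hcase | hcase
  · -- t ≤ 2t'
    rcases le_or_gt (t - t') (2*N) with hsub | hsub
    · have hg7N0 : 0 ≤ 2*g7*N := by positivity
      have hc8N0 : 0 ≤ (2*c8)^p*N := mul_nonneg hc8p0 hN0.le
      have : 2*N ≤ D := by rw [hD]; linarith
      linarith
    · -- main case
      have htpt' : t^(1/p) ≤ 2*t'^(1/p) := by
        calc t^(1/p) ≤ (2*t')^(1/p) :=
              Real.rpow_le_rpow ht0.le hcase (by positivity)
          _ = 2^((1:ℝ)/p) * t'^(1/p) := Real.mul_rpow (by norm_num) ht'0.le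
          _ ≤ 2*t'^(1/p) := mul_le_mul_of_nonneg_right h2pow ht'p0.le
      have hkq : k^(1/q) ≤ (t-t')^(1/q) + g6 * N^(1/q) := by
        have h1 : k^(1/q) ≤ ((t-t') + g6*N)^(1/q) :=
          Real.rpow_le_rpow hk hksub (by positivity)
        have h2 : ((t-t') + g6*N)^(1/q) ≤ (t-t')^(1/q) + (g6*N)^(1/q) :=
          subadd (by linarith) (by positivity) (by positivity) hq1inv
        have h3 : (g6*N)^(1/q) ≤ g6 * N^(1/q) := by
          rw [Real.mul_rpow hg60 hN0.le]
          apply mul_le_mul_of_nonneg_right _ (Real.rpow_nonneg hN0.le _)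
          calc g6^(1/q) ≤ g6^(1:ℝ) := Real.rpow_le_rpow_of_exponent_le (by linarith) hq1inv
            _ = g6 := Real.rpow_one g6
        linarith
      have hterm2 : q * (t-lam)^(1/p) * (d'^(1/p)*k^(1/q))
          ≤ 4*q*(Abar*N^(1/p)) * ((t-t')^(1/q) + g6 * N^(1/q)) := by
        have hstep1 : (t-lam)^(1/p) * d'^(1/p) ≤ 4*(Abar*N^(1/p)) := by
          have e1 : (t-lam)^(1/p) * d'^(1/p) ≤ (2*t^(1/p)) * d'^(1/p) :=
            mul_le_mul_of_nonneg_right h2rt hd'0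
          have e2 : t^(1/p) * d'^(1/p) ≤ (2*t'^(1/p))*d'^(1/p) :=
            mul_le_mul_of_nonneg_right htpt' hd'0
          have e3 : t'^(1/p)*d'^(1/p) ≤ (Abar*N)^(1/p) := by rw [mul_comm]; exact hd'p
          have e1' : (2*t^(1/p)) * d'^(1/p) = 2*(t^(1/p)*d'^(1/p)) := by ring
          have e2' : (2*t'^(1/p)) * d'^(1/p) = 2*(t'^(1/p)*d'^(1/p)) := by ring
          rw [e1'] at e1
          rw [e2'] at e2
          linarith [hABp]
        calc q * (t-lam)^(1/p) * (d'^(1/p)*k^(1/q))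
            = ((t-lam)^(1/p) * d'^(1/p)) * (q * k^(1/q)) := by ring
          _ ≤ (4*(Abar*N^(1/p))) * (q * k^(1/q)) := by
              apply mul_le_mul_of_nonneg_right hstep1 (by positivity)
          _ = (q*4*(Abar*N^(1/p))) * k^(1/q) := by ring
          _ ≤ (q*4*(Abar*N^(1/p))) * ((t-t')^(1/q) + g6 * N^(1/q)) := by
              apply mul_le_mul_of_nonneg_left hkq (by positivity)
          _ = 4*q*(Abar*N^(1/p))*((t-t')^(1/q) + g6 * N^(1/q)) := by ring
      have hNsplit : N^(1/p) * N^(1/q) = N := rpow_split hpq hN0.le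
      have hdelta : t - t' ≤ g7*N + c8 * N^(1/p) * (t-t')^(1/q) := by
        have hlhs : (t - t') - N ≤ (t-lam) - (b₂+t') := by linarith
        have hNdelta : N ≤ (t-t')/2 := by linarith
        have hchain : (t-t')/2 ≤ 2*q*b₃*(Abar*N)
            + 4*q*(Abar*N^(1/p)) * ((t-t')^(1/q) + g6 * N^(1/q)) := by
          have := hmain
          have hdist : q * (t-lam)^(1/p) * (b₃*dt^(1/p) + d'^(1/p)*k^(1/q))
              = q * (t-lam)^(1/p) * (b₃*dt^(1/p)) + q * (t-lam)^(1/p) * (d'^(1/p)*k^(1/q)) := by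
            ring
          rw [hdist] at this
          linarith
        have hexpand : 2*q*b₃*(Abar*N)
            + 4*q*(Abar*N^(1/p)) * ((t-t')^(1/q) + g6 * N^(1/q))
            = 2*q*b₃*(Abar*N) + 4*q*Abar*g6*(N^(1/p)*N^(1/q))
              + (4*q*Abar)*(N^(1/p)*(t-t')^(1/q)) := by ring
        rw [hexpand, hNsplit] at hchain
        have e : g7*N = 4*q*b₃*(Abar*N) + 8*q*Abar*g6*N := by rw [hg7]; ring
        have e2 : c8 * N^(1/p) * (t-t')^(1/q) = (8*q*Abar)*(N^(1/p)*(t-t')^(1/q)) := by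
          rw [hc8]; ring
        rw [e, e2]
        linarith
      -- conclude by contradiction
      by_contra hcon
      push_neg at hcon
      have hg7N0 : 0 ≤ 2*g7*N := by positivity
      have hc8N0 : 0 ≤ (2*c8)^p*N := mul_nonneg hc8p0 hN0.le
      have hDbound1 : 2*g7*N ≤ D := by rw [hD]; linarith
      have hDbound2 : (2*c8)^p*N ≤ D := by rw [hD]; linarith
      have hdel0 : (0:ℝ) < t - t' := by linarith
      have hdel1 : (1:ℝ) ≤ t - t' := by linarith
      have hroot : 2*c8*N^(1/p) < (t-t')^(1/p) := by
        have h1 : (2*c8)^p*N < t - t' := by linarith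
        have h2 : ((2*c8)^p*N)^(1/p) < (t-t')^(1/p) := by
          apply Real.rpow_lt_rpow (by positivity) h1 (by positivity)
        have e : ((2*c8)^p*N)^(1/p) = 2*c8*N^(1/p) := by
          rw [Real.mul_rpow (Real.rpow_nonneg (by linarith) _) hN0.le,
            rpow_p_one_div_cancel (by linarith) hp0.ne']
        linarith [e ▸ h2]
      have hsplitd : (t-t')^(1/p) * (t-t')^(1/q) = t - t' := rpow_split hpq hdel0.le
      have hq0' : (0:ℝ) < (t-t')^(1/q) := Real.rpow_pos_of_pos hdel0 _
      have hfinal : c8 * N^(1/p) * (t-t')^(1/q) < (t-t')/2 := by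
        have h := mul_lt_mul_of_pos_right hroot hq0'
        rw [hsplitd] at h
        have e : 2*c8*N^(1/p) * (t-t')^(1/q) = 2*(c8*N^(1/p)*(t-t')^(1/q)) := by ring
        rw [e] at h
        linarith
      have hg7N : g7*N < (t-t')/2 := by linarith
      linarith
  · -- t > 2t' : contradiction
    exfalso
    have hd'small : d'^(1/p) ≤ 1/(16*q) := by
      have ht'big : (16*q*Abar)^p * N ≤ t' := le_trans hTbig hTt'
      have hd'le : d' * ((16*q*Abar)^p * N) ≤ Abar * N := by
        have : d' * ((16*q*Abar)^p * N) ≤ d' * t' :=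
          mul_le_mul_of_nonneg_left ht'big hd'
        linarith
      have hpos : (0:ℝ) < (16*q*Abar)^p := Real.rpow_pos_of_pos (by positivity) _
      have hd'le2 : d' ≤ Abar / (16*q*Abar)^p := by
        rw [le_div_iff₀ hpos]
        have hNinv : d' * (16*q*Abar)^p * N ≤ Abar * N := by
          calc d' * (16*q*Abar)^p * N = d' * ((16*q*Abar)^p * N) := by ring
            _ ≤ Abar * N := hd'le
        exact (mul_le_mul_iff_of_pos_right hN0).mp hNinv
      calc d'^(1/p) ≤ (Abar / (16*q*Abar)^p)^(1/p) :=
            Real.rpow_le_rpow hd' hd'le2 (by positivity)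
        _ = Abar^(1/p) / (16*q*Abar) := by
            rw [Real.div_rpow hA0.le hpos.le, rpow_p_one_div_cancel (by positivity) hp0.ne']
        _ ≤ Abar / (16*q*Abar) := by
            apply div_le_div_of_nonneg_right _ (by positivity)
            calc Abar^(1/p) ≤ Abar^(1:ℝ) := Real.rpow_le_rpow_of_exponent_le hA1 hp1inv
              _ = Abar := Real.rpow_one Abar
        _ = 1/(16*q) := by
            field_simp
    have hkbt : k^(1/q) ≤ b₂^(1/q) + t^(1/q) := by
      calc k^(1/q) ≤ (b₂+t)^(1/q) := Real.rpow_le_rpow hk (by linarith) (by positivity)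
        _ ≤ b₂^(1/q) + t^(1/q) := subadd hb₂ ht0.le (by positivity) hq1inv
    have hlhs4 : t/4 ≤ (t-lam) - (b₂+t') := by
      -- t - lam - b₂ - t' ≥ t - |lam| - b₂ - t/2 ≥ t/2 - N ≥ t/4 since t ≥ 4N
      have h4N : 4*N ≤ t := by linarith
      linarith
    have hrhs : b₃*dt^(1/p) + d'^(1/p)*k^(1/q) ≤ b₃ + (1/(16*q))*(b₂^(1/q) + t^(1/q)) := by
      have h1 : b₃*dt^(1/p) ≤ b₃ := mul_le_of_le_one_right hb₃ hdtle1
      have h2 : d'^(1/p)*k^(1/q) ≤ (1/(16*q))*(b₂^(1/q) + t^(1/q)) := by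
        calc d'^(1/p)*k^(1/q) ≤ (1/(16*q))*k^(1/q) :=
              mul_le_mul_of_nonneg_right hd'small hk0
          _ ≤ (1/(16*q))*(b₂^(1/q) + t^(1/q)) :=
              mul_le_mul_of_nonneg_left hkbt (by positivity)
      linarith
    have hchain : t/4 ≤ q * (2*t^(1/p)) * (b₃ + (1/(16*q))*(b₂^(1/q) + t^(1/q))) := by
      have hb' : (0:ℝ) ≤ b₃ + (1/(16*q))*(b₂^(1/q) + t^(1/q)) := by positivity
      calc t/4 ≤ (t-lam) - (b₂+t') := hlhs4
        _ ≤ q * (t-lam)^(1/p) * ((t-lam)^(1/q) - (b₂+t')^(1/q)) := hrdmain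
        _ ≤ q * (t-lam)^(1/p) * (b₃ + (1/(16*q))*(b₂^(1/q) + t^(1/q))) := by
            apply mul_le_mul_of_nonneg_left _ (by positivity)
            linarith
        _ ≤ q * (2*t^(1/p)) * (b₃ + (1/(16*q))*(b₂^(1/q) + t^(1/q))) := by
            apply mul_le_mul_of_nonneg_right _ hb'
            exact mul_le_mul_of_nonneg_left h2rt hq0.le
    have hsplitt : t^(1/p) * t^(1/q) = t := rpow_split hpq ht0.le
    have hdiv : t^(1/q)/4 ≤ 2*q*b₃ + (1/8)*(b₂^(1/q) + t^(1/q)) := by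
      have e1 : t^(1/p) * (t^(1/q)/4) = t/4 := by
        rw [show t^(1/p) * (t^(1/q)/4) = (t^(1/p) * t^(1/q))/4 from by ring, hsplitt]
      have e2 : q * (2*t^(1/p)) * (b₃ + (1/(16*q))*(b₂^(1/q) + t^(1/q)))
          = t^(1/p) * (2*q*b₃ + (1/8)*(b₂^(1/q) + t^(1/q))) := by
        field_simp
        ring
      rw [← e1, e2] at hchain
      exact le_of_mul_le_mul_left hchain htp0
    have htq16 : t^(1/q) ≤ 16*q*(b₃ + b₂^(1/q)) := by
      have h8 : t^(1/q)*(1/8) ≤ 2*q*b₃ + b₂^(1/q)/8 := by linarith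
      have h9 : (0:ℝ) ≤ (16*q - 1) * b₂^(1/q) := mul_nonneg (by linarith) hb2q
      have h10 : (0:ℝ) ≤ (16*q - 16) * b₃ := mul_nonneg (by linarith) hb₃
      linarith [h8, h9, h10]
    have htle : t ≤ (16*q*(b₃+b₂^(1/q)))^q := by
      have h1 : (t^(1/q))^q ≤ (16*q*(b₃+b₂^(1/q)))^q :=
        Real.rpow_le_rpow (Real.rpow_nonneg ht0.le _) htq16 hq0.le
      rwa [rpow_one_div_cancel ht0.le hq0.ne'] at h1
    linarith



lemma exp_rpow (x y : ℝ) : Real.exp x ^ y = Real.exp (x*y) := by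
  rw [Real.rpow_def_of_pos (Real.exp_pos x), Real.log_exp]

/-- The measure-theoretic inequality at a pair of points `t' ≤ t` with `F t ≤ lam`. -/
lemma ML {p q b₂ b₃ : ℝ} (hpq : p.HolderConjugate q) (hb₂ : 0 ≤ b₂) (hb₃ : 0 ≤ b₃)
    {φ ψ : ℝ → ℝ} (hφm : Measurable φ) (hψm : Measurable ψ)
    (hφ0 : ∀ s, 0 ≤ φ s) (hψ0 : ∀ s, 0 ≤ ψ s)
    (ha : (∫⁻ s, ENNReal.ofReal (φ s ^ p)) ≤ 1)
    (hb : ∀ t : ℝ, 0 ≤ t →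
      (∫⁻ s in Iic t, ENNReal.ofReal (ψ s ^ q)) ≤ ENNReal.ofReal (b₂ + t))
    (hc : ∀ t : ℝ, 0 ≤ t →
      ENNReal.ofReal (Real.exp (t / p)) *
        (∫⁻ s in Ioi t, ENNReal.ofReal (Real.exp (-s / p) * ψ s)) ≤ ENNReal.ofReal b₃)
    {lam t' t : ℝ} (ht'0 : 0 ≤ t') (ht't : t' ≤ t) (hlam : lam ≤ t)
    (hF : adamsF p φ ψ t ≤ lam) :
    (t - lam) ^ (1/q) ≤
      b₃ * ((∫⁻ s in Ioi t, ENNReal.ofReal (φ s ^ p)).toReal) ^ (1/p)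
      + ((∫⁻ s in Iic t', ENNReal.ofReal (φ s ^ p)).toReal) ^ (1/p) *
          ((∫⁻ s in Iic t', ENNReal.ofReal (ψ s ^ q)).toReal) ^ (1/q)
      + ((∫⁻ s in Ioi t', ENNReal.ofReal (φ s ^ p)).toReal) ^ (1/p) *
          ((∫⁻ s in Ioc t' t, ENNReal.ofReal (ψ s ^ q)).toReal) ^ (1/q) := by
  have hq : q = p / (p-1) := hpq.conjugate_eq
  have hp1 : 1 < p := hpq.lt
  have hp0 : 0 < p := hpq.pos
  have hq0 : 0 < q := hpq.symm.pos
  have ht0 : (0:ℝ) ≤ t := le_trans ht'0 ht't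
  -- measurable functions
  have hφE : Measurable fun s => ENNReal.ofReal (φ s) :=
    ENNReal.measurable_ofReal.comp hφm
  have hψE : Measurable fun s => ENNReal.ofReal (ψ s) :=
    ENNReal.measurable_ofReal.comp hψm
  have hφpE : Measurable fun s => ENNReal.ofReal (φ s ^ p) :=
    ENNReal.measurable_ofReal.comp (hφm.pow_const p)
  have hψqE : Measurable fun s => ENNReal.ofReal (ψ s ^ q) :=
    ENNReal.measurable_ofReal.comp (hψm.pow_const q)
  -- notation
  set dtE := ∫⁻ s in Ioi t, ENNReal.ofReal (φ s ^ p) with hdtEdef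
  set mE := ∫⁻ s in Iic t', ENNReal.ofReal (φ s ^ p) with hmEdef
  set dE := ∫⁻ s in Ioi t', ENNReal.ofReal (φ s ^ p) with hdEdef
  set nE := ∫⁻ s in Iic t', ENNReal.ofReal (ψ s ^ q) with hnEdef
  set kE := ∫⁻ s in Ioc t' t, ENNReal.ofReal (ψ s ^ q) with hkEdef
  have hdtE1 : dtE ≤ 1 := le_trans (setLIntegral_le_lintegral _ _) ha
  have hmE1 : mE ≤ 1 := le_trans (setLIntegral_le_lintegral _ _) ha
  have hdE1 : dE ≤ 1 := le_trans (setLIntegral_le_lintegral _ _) ha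
  have hnEb : nE ≤ ENNReal.ofReal (b₂ + t') := hb t' ht'0
  have hkEb : kE ≤ ENNReal.ofReal (b₂ + t) := by
    refine le_trans ?_ (hb t ht0)
    exact lintegral_mono_set (fun s hs => le_trans hs.2 (le_refl t))
  have hdtE_ne : dtE ≠ ⊤ := ne_top_of_le_ne_top ENNReal.one_ne_top hdtE1
  have hmE_ne : mE ≠ ⊤ := ne_top_of_le_ne_top ENNReal.one_ne_top hmE1
  have hdE_ne : dE ≠ ⊤ := ne_top_of_le_ne_top ENNReal.one_ne_top hdE1
  have hnE_ne : nE ≠ ⊤ := ne_top_of_le_ne_top ENNReal.ofReal_ne_top hnEb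
  have hkE_ne : kE ≠ ⊤ := ne_top_of_le_ne_top ENNReal.ofReal_ne_top hkEb
  -- unfold adamsF
  set J1 : ℝ := ∫ s in Ioi t, Real.exp (-s / q) * φ s with hJ1def
  set J2 : ℝ := ∫ s in Ioi t, Real.exp (-s / p) * ψ s with hJ2def
  set BB : ℝ := ∫ s in Iic t, φ s * ψ s with hBBdef
  have hF' : t - (Real.exp t * J1 * J2 + BB) ^ q ≤ lam := by
    rw [hJ1def, hJ2def, hBBdef, hq]
    exact hF
  have hJ1nn : 0 ≤ J1 :=
    integral_nonneg fun s => mul_nonneg (Real.exp_pos _).le (hφ0 s)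
  have hJ2nn : 0 ≤ J2 :=
    integral_nonneg fun s => mul_nonneg (Real.exp_pos _).le (hψ0 s)
  have hBBnn : 0 ≤ BB := integral_nonneg fun s => mul_nonneg (hφ0 s) (hψ0 s)
  set X : ℝ := Real.exp t * J1 * J2 + BB with hXdef
  have hX0 : 0 ≤ X := by
    have : 0 ≤ Real.exp t * J1 * J2 := by positivity
    simp only [hXdef]; linarith
  have hroot : (t - lam) ^ (1/q) ≤ X := by
    have h1 : t - lam ≤ X ^ q := by
      simp only [hXdef] at hF' ⊢; linarith
    calc (t-lam)^(1/q) ≤ (X^q)^(1/q) :=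
          Real.rpow_le_rpow (by linarith) h1 (by positivity)
      _ = X := rpow_p_one_div_cancel hX0 hq0.ne'
  -- bound J1
  have hJ1 : J1 ≤ dtE.toReal ^ (1/p) * Real.exp (-(t/q)) := by
    have hmeas1 : AEStronglyMeasurable (fun s => Real.exp (-s / q) * φ s)
        (volume.restrict (Ioi t)) :=
      ((Real.measurable_exp.comp (measurable_id.neg.div_const q)).mul hφm).aestronglyMeasurable
    have heq : J1 = (∫⁻ s in Ioi t, ENNReal.ofReal (Real.exp (-s/q) * φ s)).toReal := by
      rw [hJ1def, integral_eq_lintegral_of_nonneg_ae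
        (ae_of_all _ fun s => mul_nonneg (Real.exp_pos _).le (hφ0 s)) hmeas1]
    have hHold : (∫⁻ s in Ioi t, ENNReal.ofReal (Real.exp (-s/q) * φ s))
        ≤ dtE ^ (1/p) * (ENNReal.ofReal (Real.exp (-t))) ^ (1/q) := by
      have key := ENNReal.lintegral_mul_le_Lp_mul_Lq (volume.restrict (Ioi t)) hpq
        (f := fun s => ENNReal.ofReal (φ s)) (g := fun s => ENNReal.ofReal (Real.exp (-s/q)))
        hφE.aemeasurable
        ((ENNReal.measurable_ofReal.comp
          (Real.measurable_exp.comp (measurable_id.neg.div_const q))).aemeasurable)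
      have e1 : (∫⁻ s in Ioi t, ENNReal.ofReal (Real.exp (-s/q) * φ s))
          = ∫⁻ s in Ioi t,
            ((fun s => ENNReal.ofReal (φ s)) * fun s => ENNReal.ofReal (Real.exp (-s/q))) s := by
        apply lintegral_congr
        intro s
        simp only [Pi.mul_apply]
        rw [← ENNReal.ofReal_mul (hφ0 s), mul_comm]
      have e2 : (∫⁻ s in Ioi t, (ENNReal.ofReal (φ s)) ^ p) = dtE := by
        rw [hdtEdef]
        apply lintegral_congr
        intro s
        rw [ENNReal.ofReal_rpow_of_nonneg (hφ0 s) hp0.le]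
      have e3 : (∫⁻ s in Ioi t, (ENNReal.ofReal (Real.exp (-s/q))) ^ q)
          = ENNReal.ofReal (Real.exp (-t)) := by
        have e3a : ∀ s : ℝ, (ENNReal.ofReal (Real.exp (-s/q))) ^ q
            = ENNReal.ofReal (Real.exp (-s)) := by
          intro s
          rw [ENNReal.ofReal_rpow_of_nonneg (Real.exp_pos _).le hq0.le, exp_rpow]
          congr 1
          field_simp
        rw [lintegral_congr e3a]
        rw [← ofReal_integral_eq_lintegral_ofReal]
        · rw [integral_exp_neg_Ioi]
        · have := exp_neg_integrableOn_Ioi t one_pos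
          simpa [IntegrableOn] using this
        · exact ae_of_all _ fun s => (Real.exp_pos _).le
      rw [e1, ← e2, ← e3]
      exact key
    have hfin : dtE ^ (1/p) * (ENNReal.ofReal (Real.exp (-t))) ^ (1/q) ≠ ⊤ := by
      apply ENNReal.mul_ne_top
      · exact ENNReal.rpow_ne_top_of_nonneg (by positivity) hdtE_ne
      · exact ENNReal.rpow_ne_top_of_nonneg (by positivity) ENNReal.ofReal_ne_top
    rw [heq]
    calc (∫⁻ s in Ioi t, ENNReal.ofReal (Real.exp (-s/q) * φ s)).toReal
        ≤ (dtE ^ (1/p) * (ENNReal.ofReal (Real.exp (-t))) ^ (1/q)).toReal :=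
          ENNReal.toReal_mono hfin hHold
      _ = dtE.toReal ^ (1/p) * Real.exp (-(t/q)) := by
          rw [ENNReal.toReal_mul, ← ENNReal.toReal_rpow, ← ENNReal.toReal_rpow,
            ENNReal.toReal_ofReal (Real.exp_pos _).le, exp_rpow]
          congr 2
          field_simp
  -- bound J2
  have hJ2 : J2 ≤ Real.exp (-(t/p)) * b₃ := by
    set J2E := ∫⁻ s in Ioi t, ENNReal.ofReal (Real.exp (-s / p) * ψ s) with hJ2E
    have hmeas2 : AEStronglyMeasurable (fun s => Real.exp (-s / p) * ψ s)
        (volume.restrict (Ioi t)) :=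
      ((Real.measurable_exp.comp (measurable_id.neg.div_const p)).mul hψm).aestronglyMeasurable
    have heq : J2 = J2E.toReal := by
      rw [hJ2def, integral_eq_lintegral_of_nonneg_ae
        (ae_of_all _ fun s => mul_nonneg (Real.exp_pos _).le (hψ0 s)) hmeas2]
    have hkey : J2E ≤ ENNReal.ofReal (Real.exp (-(t/p))) * ENNReal.ofReal b₃ := by
      have e : J2E = ENNReal.ofReal (Real.exp (-(t/p)))
          * (ENNReal.ofReal (Real.exp (t/p)) * J2E) := by
        rw [← mul_assoc, ← ENNReal.ofReal_mul (Real.exp_pos _).le, ← Real.exp_add]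
        norm_num
      rw [e]
      exact mul_le_mul_right (hc t ht0) _
    rw [heq]
    calc J2E.toReal ≤ (ENNReal.ofReal (Real.exp (-(t/p))) * ENNReal.ofReal b₃).toReal :=
          ENNReal.toReal_mono (ENNReal.mul_ne_top ENNReal.ofReal_ne_top ENNReal.ofReal_ne_top)
            hkey
      _ = Real.exp (-(t/p)) * b₃ := by
          rw [ENNReal.toReal_mul, ENNReal.toReal_ofReal (Real.exp_pos _).le,
            ENNReal.toReal_ofReal hb₃]
  -- bound BB
  have hBB : BB ≤ mE.toReal ^ (1/p) * nE.toReal ^ (1/q)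
      + dE.toReal ^ (1/p) * kE.toReal ^ (1/q) := by
    set BE := ∫⁻ s in Iic t, ENNReal.ofReal (φ s * ψ s) with hBEdef
    have hmeas3 : AEStronglyMeasurable (fun s => φ s * ψ s) (volume.restrict (Iic t)) :=
      (hφm.mul hψm).aestronglyMeasurable
    have heq : BB = BE.toReal := by
      rw [hBBdef, integral_eq_lintegral_of_nonneg_ae
        (ae_of_all _ fun s => mul_nonneg (hφ0 s) (hψ0 s)) hmeas3]
    -- split
    have hsplit : BE = (∫⁻ s in Iic t', ENNReal.ofReal (φ s * ψ s))
        + (∫⁻ s in Ioc t' t, ENNReal.ofReal (φ s * ψ s)) := by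
      rw [hBEdef, ← Iic_union_Ioc_eq_Iic ht't,
        lintegral_union measurableSet_Ioc (Iic_disjoint_Ioc le_rfl)]
    -- Hölder on each piece
    have holder_piece : ∀ S : Set ℝ,
        (∫⁻ s in S, ENNReal.ofReal (φ s * ψ s))
        ≤ (∫⁻ s in S, ENNReal.ofReal (φ s ^ p)) ^ (1/p)
          * (∫⁻ s in S, ENNReal.ofReal (ψ s ^ q)) ^ (1/q) := by
      intro S
      have key := ENNReal.lintegral_mul_le_Lp_mul_Lq (volume.restrict S) hpq
        (f := fun s => ENNReal.ofReal (φ s)) (g := fun s => ENNReal.ofReal (ψ s))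
        hφE.aemeasurable hψE.aemeasurable
      have e1 : (∫⁻ s in S, ENNReal.ofReal (φ s * ψ s))
          = ∫⁻ s in S, ((fun s => ENNReal.ofReal (φ s)) * fun s => ENNReal.ofReal (ψ s)) s := by
        apply lintegral_congr
        intro s
        simp only [Pi.mul_apply]
        rw [← ENNReal.ofReal_mul (hφ0 s)]
      have e2 : (∫⁻ s in S, (ENNReal.ofReal (φ s)) ^ p)
          = ∫⁻ s in S, ENNReal.ofReal (φ s ^ p) :=
        lintegral_congr fun s => ENNReal.ofReal_rpow_of_nonneg (hφ0 s) hp0.le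
      have e3 : (∫⁻ s in S, (ENNReal.ofReal (ψ s)) ^ q)
          = ∫⁻ s in S, ENNReal.ofReal (ψ s ^ q) :=
        lintegral_congr fun s => ENNReal.ofReal_rpow_of_nonneg (hψ0 s) hq0.le
      rw [e1, ← e2, ← e3]
      exact key
    have hp1' := holder_piece (Iic t')
    have hp2' : (∫⁻ s in Ioc t' t, ENNReal.ofReal (φ s * ψ s))
        ≤ dE ^ (1/p) * kE ^ (1/q) := by
      refine le_trans (holder_piece (Ioc t' t)) ?_
      apply mul_le_mul_left
      apply ENNReal.rpow_le_rpow _ (by positivity)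
      exact lintegral_mono_set (fun s hs => hs.1)
    have hBEle : BE ≤ mE ^ (1/p) * nE ^ (1/q) + dE ^ (1/p) * kE ^ (1/q) := by
      rw [hsplit]
      exact add_le_add hp1' hp2'
    have hfin1 : mE ^ (1/p) * nE ^ (1/q) ≠ ⊤ :=
      ENNReal.mul_ne_top (ENNReal.rpow_ne_top_of_nonneg (by positivity) hmE_ne)
        (ENNReal.rpow_ne_top_of_nonneg (by positivity) hnE_ne)
    have hfin2 : dE ^ (1/p) * kE ^ (1/q) ≠ ⊤ :=
      ENNReal.mul_ne_top (ENNReal.rpow_ne_top_of_nonneg (by positivity) hdE_ne)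
        (ENNReal.rpow_ne_top_of_nonneg (by positivity) hkE_ne)
    rw [heq]
    calc BE.toReal ≤ (mE ^ (1/p) * nE ^ (1/q) + dE ^ (1/p) * kE ^ (1/q)).toReal :=
          ENNReal.toReal_mono (by
            rw [ENNReal.add_ne_top]
            exact ⟨hfin1, hfin2⟩) hBEle
      _ = mE.toReal ^ (1/p) * nE.toReal ^ (1/q) + dE.toReal ^ (1/p) * kE.toReal ^ (1/q) := by
          rw [ENNReal.toReal_add hfin1 hfin2, ENNReal.toReal_mul, ENNReal.toReal_mul,
            ← ENNReal.toReal_rpow, ← ENNReal.toReal_rpow, ← ENNReal.toReal_rpow,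
            ← ENNReal.toReal_rpow]
  -- bound the product term
  have hprod : Real.exp t * J1 * J2 ≤ b₃ * dtE.toReal ^ (1/p) := by
    have h1 : Real.exp t * J1 * J2
        ≤ Real.exp t * (dtE.toReal ^ (1/p) * Real.exp (-(t/q))) * (Real.exp (-(t/p)) * b₃) := by
      apply mul_le_mul
      · exact mul_le_mul_of_nonneg_left hJ1 (Real.exp_pos t).le
      · exact hJ2
      · exact hJ2nn
      · positivity
    have h2 : Real.exp t * (dtE.toReal ^ (1/p) * Real.exp (-(t/q))) * (Real.exp (-(t/p)) * b₃)
        = b₃ * dtE.toReal ^ (1/p) * (Real.exp t * Real.exp (-(t/q)) * Real.exp (-(t/p))) := by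
      ring
    have h3 : Real.exp t * Real.exp (-(t/q)) * Real.exp (-(t/p)) = 1 := by
      rw [← Real.exp_add, ← Real.exp_add, ← Real.exp_zero]
      congr 1
      have h := hpq.inv_add_inv_eq_one
      linear_combination (-t) * h
    rw [h2, h3, mul_one] at h1
    exact h1
  -- final chain
  calc (t - lam) ^ (1/q) ≤ X := hroot
    _ = Real.exp t * J1 * J2 + BB := by rw [hXdef]
    _ ≤ b₃ * dtE.toReal ^ (1/p)
        + (mE.toReal ^ (1/p) * nE.toReal ^ (1/q) + dE.toReal ^ (1/p) * kE.toReal ^ (1/q)) := by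
        exact add_le_add hprod hBB
    _ = b₃ * dtE.toReal ^ (1/p) + mE.toReal ^ (1/p) * nE.toReal ^ (1/q)
        + dE.toReal ^ (1/p) * kE.toReal ^ (1/q) := by ring



end AdamsAux

/-- Fact (ii) in the proof of the local Adams inequality: the Lebesgue measure of the
sublevel set `E_λ = {t ≥ 0 : F(t) ≤ λ}` satisfies `|E_λ| ≤ B₁|λ| + B₂`, with
`B₁, B₂` depending only on `p, b₂, b₃`. -/
theorem adamsF_sublevel_measure (p b₂ b₃ : ℝ) (hp : 1 < p) (hb₂ : 0 ≤ b₂) (hb₃ : 0 ≤ b₃) :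
    ∃ B₁ B₂ : ℝ, 0 ≤ B₁ ∧ 0 ≤ B₂ ∧ ∀ φ ψ : ℝ → ℝ, Measurable φ → Measurable ψ →
      (∀ s, 0 ≤ φ s) → (∀ s, 0 ≤ ψ s) →
      (∫⁻ s, ENNReal.ofReal (φ s ^ p)) ≤ 1 →
      (∀ t : ℝ, 0 ≤ t →
        (∫⁻ s in Iic t, ENNReal.ofReal (ψ s ^ (p / (p - 1)))) ≤ ENNReal.ofReal (b₂ + t)) →
      (∀ t : ℝ, 0 ≤ t →
        ENNReal.ofReal (Real.exp (t / p)) *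
          (∫⁻ s in Ioi t, ENNReal.ofReal (Real.exp (-s / p) * ψ s)) ≤ ENNReal.ofReal b₃) →
      ∀ lam : ℝ,
        volume {t : ℝ | 0 ≤ t ∧ adamsF p φ ψ t ≤ lam} ≤ ENNReal.ofReal (B₁ * |lam| + B₂) := by
  set q := p / (p - 1) with hqdef
  have hpq : p.HolderConjugate q := (Real.holderConjugate_iff_eq_conjExponent hp).mpr hqdef
  have hp0 : 0 < p := hpq.pos
  have hq1 : 1 < q := hpq.symm.lt
  have hq0 : 0 < q := hpq.symm.pos
  -- constants
  obtain ⟨g, hgdef⟩ : ∃ g : ℝ, g = 1 + b₃ + 2^q*b₃^q := ⟨_, rfl⟩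
  obtain ⟨Abar, hAdef⟩ : ∃ A : ℝ, A = 6*p*g := ⟨_, rfl⟩
  obtain ⟨g6, hg6def⟩ : ∃ x : ℝ, x = 2 + 2*q*b₃*Abar := ⟨_, rfl⟩
  obtain ⟨g7, hg7def⟩ : ∃ x : ℝ, x = 4*q*b₃*Abar + 8*q*Abar*g6 := ⟨_, rfl⟩
  obtain ⟨c8, hc8def⟩ : ∃ x : ℝ, x = 8*q*Abar := ⟨_, rfl⟩
  obtain ⟨dcoef, hdcoefdef⟩ : ∃ x : ℝ, x = 2 + 2*g7 + (2*c8)^p := ⟨_, rfl⟩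
  obtain ⟨tcoef, htcoefdef⟩ : ∃ x : ℝ, x = 2 + (16*q*Abar)^p := ⟨_, rfl⟩
  obtain ⟨T3, hT3def⟩ : ∃ x : ℝ, x = (16*q*(b₃+b₂^(1/q)))^q := ⟨_, rfl⟩
  -- positivity of constants
  have hpow0 : (0:ℝ) ≤ 2^q*b₃^q := by positivity
  have hg1 : 1 ≤ g := by rw [hgdef]; linarith
  have hA6 : 6 ≤ Abar := by
    have h1 : 1*1 ≤ p*g := mul_le_mul hp.le hg1 zero_le_one (by linarith)
    rw [hAdef]; linarith
  have hA0 : 0 < Abar := by linarith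
  have hqbA0 : 0 ≤ 2*q*b₃*Abar := by positivity
  have hg62 : 2 ≤ g6 := by rw [hg6def]; linarith
  have hg60 : 0 ≤ g6 := by linarith
  have hg70 : 0 ≤ g7 := by
    rw [hg7def]
    have h1 : 0 ≤ 4*q*b₃*Abar := by positivity
    have h2 : 0 ≤ 8*q*Abar*g6 := by apply mul_nonneg _ hg60; positivity
    linarith
  have hc80 : 0 < c8 := by rw [hc8def]; positivity
  have hc8p0 : (0:ℝ) ≤ (2*c8)^p := Real.rpow_nonneg (by linarith) _
  have h16qA : (0:ℝ) ≤ (16*q*Abar)^p := Real.rpow_nonneg (by positivity) _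
  have hT30 : (0:ℝ) ≤ T3 := by rw [hT3def]; positivity
  have hdcoef2 : 2 ≤ dcoef := by rw [hdcoefdef]; linarith
  have htcoef2 : 2 ≤ tcoef := by rw [htcoefdef]; linarith
  have hdcoef0 : 0 ≤ dcoef := by linarith
  have htcoef0 : 0 ≤ tcoef := by linarith
  refine ⟨tcoef + 2*dcoef, (tcoef + 2*dcoef)*(1+b₂) + T3, by linarith, ?_, ?_⟩
  · have : 0 ≤ (tcoef + 2*dcoef)*(1+b₂) := by positivity
    linarith
  intro φ ψ hφm hψm hφ0 hψ0 ha hb hc lam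
  obtain ⟨N, hNdef⟩ : ∃ x : ℝ, x = 1 + |lam| + b₂ := ⟨_, rfl⟩
  obtain ⟨T, hTdef⟩ : ∃ x : ℝ, x = tcoef*N + T3 := ⟨_, rfl⟩
  obtain ⟨D, hDdef⟩ : ∃ x : ℝ, x = dcoef*N := ⟨_, rfl⟩
  have habs : 0 ≤ |lam| := abs_nonneg lam
  have hN1 : 1 ≤ N := by rw [hNdef]; linarith
  have hN0 : 0 < N := by linarith
  have hD0 : 0 ≤ D := by rw [hDdef]; positivity
  have hT2N : 2*N ≤ T := by
    rw [hTdef]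
    have h1 : 2*N ≤ tcoef*N := mul_le_mul_of_nonneg_right htcoef2 hN0.le
    linarith
  have hT0 : 0 < T := by linarith
  have hlamT : lam ≤ T := by
    have := le_abs_self lam
    linarith
  have hBeq : (tcoef + 2*dcoef)*|lam| + ((tcoef + 2*dcoef)*(1+b₂) + T3) = T + 2*D := by
    rw [hTdef, hDdef, hNdef]; ring
  rw [hBeq]
  set E := {t : ℝ | 0 ≤ t ∧ adamsF p φ ψ t ≤ lam} with hEdef
  -- side facts
  have hmd : ∀ u : ℝ,
      (∫⁻ s in Iic u, ENNReal.ofReal (φ s ^ p)).toReal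
      + (∫⁻ s in Ioi u, ENNReal.ofReal (φ s ^ p)).toReal ≤ 1 := by
    intro u
    have hadd := lintegral_add_compl (μ := volume) (fun s => ENNReal.ofReal (φ s ^ p))
      (measurableSet_Iic (a := u))
    rw [compl_Iic] at hadd
    have h1 : (∫⁻ s in Iic u, ENNReal.ofReal (φ s ^ p)) ≤ 1 := by
      refine le_trans ?_ ha; exact setLIntegral_le_lintegral _ _
    have h2 : (∫⁻ s in Ioi u, ENNReal.ofReal (φ s ^ p)) ≤ 1 := by
      refine le_trans ?_ ha; exact setLIntegral_le_lintegral _ _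
    have h1' : (∫⁻ s in Iic u, ENNReal.ofReal (φ s ^ p)) ≠ ⊤ :=
      ne_top_of_le_ne_top ENNReal.one_ne_top h1
    have h2' : (∫⁻ s in Ioi u, ENNReal.ofReal (φ s ^ p)) ≠ ⊤ :=
      ne_top_of_le_ne_top ENNReal.one_ne_top h2
    have hsum : (∫⁻ s in Iic u, ENNReal.ofReal (φ s ^ p))
        + (∫⁻ s in Ioi u, ENNReal.ofReal (φ s ^ p)) ≤ 1 := by
      rw [hadd]; exact ha
    calc (∫⁻ s in Iic u, ENNReal.ofReal (φ s ^ p)).toReal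
          + (∫⁻ s in Ioi u, ENNReal.ofReal (φ s ^ p)).toReal
        = ((∫⁻ s in Iic u, ENNReal.ofReal (φ s ^ p))
          + (∫⁻ s in Ioi u, ENNReal.ofReal (φ s ^ p))).toReal :=
          (ENNReal.toReal_add h1' h2').symm
      _ ≤ (1 : ENNReal).toReal := ENNReal.toReal_mono ENNReal.one_ne_top hsum
      _ = 1 := ENNReal.toReal_one
  have hnble : ∀ u : ℝ, 0 ≤ u →
      (∫⁻ s in Iic u, ENNReal.ofReal (ψ s ^ q)).toReal ≤ b₂ + u := by
    intro u hu
    calc (∫⁻ s in Iic u, ENNReal.ofReal (ψ s ^ q)).toReal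
        ≤ (ENNReal.ofReal (b₂ + u)).toReal :=
          ENNReal.toReal_mono ENNReal.ofReal_ne_top (hb u hu)
      _ = b₂ + u := ENNReal.toReal_ofReal (by linarith)
  have hnk : ∀ u v : ℝ, 0 ≤ u → u ≤ v →
      (∫⁻ s in Iic u, ENNReal.ofReal (ψ s ^ q)).toReal
      + (∫⁻ s in Ioc u v, ENNReal.ofReal (ψ s ^ q)).toReal ≤ b₂ + v := by
    intro u v hu huv
    have hsplit : (∫⁻ s in Iic u, ENNReal.ofReal (ψ s ^ q))
        + (∫⁻ s in Ioc u v, ENNReal.ofReal (ψ s ^ q))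
        = ∫⁻ s in Iic v, ENNReal.ofReal (ψ s ^ q) := by
      rw [← lintegral_union measurableSet_Ioc (Iic_disjoint_Ioc le_rfl),
        Iic_union_Ioc_eq_Iic huv]
    have hv0 : (0:ℝ) ≤ v := le_trans hu huv
    have h1 : (∫⁻ s in Iic u, ENNReal.ofReal (ψ s ^ q)) ≠ ⊤ :=
      ne_top_of_le_ne_top ENNReal.ofReal_ne_top (hb u hu)
    have h2 : (∫⁻ s in Ioc u v, ENNReal.ofReal (ψ s ^ q)) ≠ ⊤ := by
      refine ne_top_of_le_ne_top ENNReal.ofReal_ne_top (le_trans ?_ (hb v hv0))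
      exact lintegral_mono_set (fun s hs => hs.2)
    calc (∫⁻ s in Iic u, ENNReal.ofReal (ψ s ^ q)).toReal
          + (∫⁻ s in Ioc u v, ENNReal.ofReal (ψ s ^ q)).toReal
        = ((∫⁻ s in Iic u, ENNReal.ofReal (ψ s ^ q))
          + (∫⁻ s in Ioc u v, ENNReal.ofReal (ψ s ^ q))).toReal :=
          (ENNReal.toReal_add h1 h2).symm
      _ = (∫⁻ s in Iic v, ENNReal.ofReal (ψ s ^ q)).toReal := by rw [hsplit]
      _ ≤ b₂ + v := hnble v hv0
  -- the core pair estimate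
  have hcore : ∀ t' t : ℝ, t' ∈ E → t ∈ E → T ≤ t' → t' ≤ t → t - t' ≤ D := by
    intro t' t ht'E htE hTt' htt
    obtain ⟨ht'0, hFt'⟩ := ht'E
    obtain ⟨ht0, hFt⟩ := htE
    have hlamt' : lam ≤ t' := le_trans hlamT hTt'
    have hlamt : lam ≤ t := le_trans hlamt' htt
    have H1 := AdamsAux.ML hpq hb₂ hb₃ hφm hψm hφ0 hψ0 ha hb hc ht'0 htt hlamt hFt
    have H2 := AdamsAux.ML hpq hb₂ hb₃ hφm hψm hφ0 hψ0 ha hb hc ht'0 le_rfl hlamt' hFt'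
    have H3 := AdamsAux.ML hpq hb₂ hb₃ hφm hψm hφ0 hψ0 ha hb hc ht0 le_rfl hlamt hFt
    simp only [Set.Ioc_self, Measure.restrict_empty, lintegral_zero_measure,
      ENNReal.toReal_zero] at H2 H3
    rw [Real.zero_rpow (by positivity : (1:ℝ)/q ≠ 0), mul_zero, add_zero] at H2 H3
    exact AdamsAux.core hpq hb₂ hb₃ hNdef hgdef hAdef hg6def hg7def hc8def
      (by rw [hDdef, hdcoefdef]) (by rw [hTdef, htcoefdef, hT3def]) hTt' htt
      ENNReal.toReal_nonneg ENNReal.toReal_nonneg ENNReal.toReal_nonneg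
      ENNReal.toReal_nonneg ENNReal.toReal_nonneg ENNReal.toReal_nonneg
      ENNReal.toReal_nonneg
      (hmd t') (hmd t) (hnble t' ht'0) (hnble t ht0) (hnk t' t ht'0 htt)
      H1 H2 H3
  -- covering argument
  by_cases hS : ∃ t₀, t₀ ∈ E ∧ T ≤ t₀
  · obtain ⟨t₀, ht₀E, hTt₀⟩ := hS
    have hsub : E ⊆ Ico 0 T ∪ Icc (t₀ - D) (t₀ + D) := by
      intro x hx
      rcases lt_or_ge x T with h | h
      · exact Or.inl ⟨hx.1, h⟩
      · refine Or.inr ?_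
        rcases le_total x t₀ with hle | hle
        · have := hcore x t₀ hx ht₀E h hle
          exact ⟨by linarith, by linarith⟩
        · have := hcore t₀ x ht₀E hx hTt₀ hle
          exact ⟨by linarith, by linarith⟩
    calc volume E ≤ volume (Ico 0 T ∪ Icc (t₀ - D) (t₀ + D)) := measure_mono hsub
      _ ≤ volume (Ico 0 T) + volume (Icc (t₀ - D) (t₀ + D)) := measure_union_le _ _
      _ = ENNReal.ofReal (T - 0) + ENNReal.ofReal (t₀ + D - (t₀ - D)) := by
          rw [Real.volume_Ico, Real.volume_Icc]
      _ = ENNReal.ofReal T + ENNReal.ofReal (2*D) := by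
          rw [sub_zero]
          congr 1
          congr 1
          ring
      _ = ENNReal.ofReal (T + 2*D) := (ENNReal.ofReal_add hT0.le (by linarith)).symm
  · push_neg at hS
    have hsub : E ⊆ Ico 0 T := by
      intro x hx
      exact ⟨hx.1, hS x hx⟩
    calc volume E ≤ volume (Ico 0 T) := measure_mono hsub
      _ = ENNReal.ofReal (T - 0) := Real.volume_Ico
      _ ≤ ENNReal.ofReal (T + 2*D) := ENNReal.ofReal_le_ofReal (by linarith)
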